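/- arXiv:2206.07122 — 2 statements merged into one kernel-verified Lean document; each statement's English description precedes it below -/
import Mathlib

section
/- Consider a random variable Y on {1,2,3} with probabilities (p₁,p₂,p₃), p₁+p₂+p₃=1, and the random partition Z taking the singleton partition with probability q₁ and the partition {{1,2},{3}} with probability 1−q₁ (0 ≤ q₁ ≤ 1). Then the structured entropy H(Y_Z) = q₁·H(p₁,p₂,p₃) + (1−q₁)·h(p₁+p₂) is maximized over distributions (p₁,p₂,p₃) when p₁ = p₂ = 1/(2(1+2^{−q₁})), where entropy is computed with logarithm base 2 and h is the binary entropy function. -/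
/-- Base-2 Shannon entropy of a distribution `(p₁, p₂, p₃)` on three points. -/
noncomputable def H3 (p1 p2 p3 : ℝ) : ℝ :=
  -(p1 * Real.logb 2 p1 + p2 * Real.logb 2 p2 + p3 * Real.logb 2 p3)

/-- Binary entropy function (base 2). -/
noncomputable def binH (s : ℝ) : ℝ :=
  -(s * Real.logb 2 s + (1 - s) * Real.logb 2 (1 - s))

/-- Structured entropy of the three-point example:
`H(Y_Z) = q₁ · H(p₁,p₂,p₃) + (1−q₁) · h(p₁+p₂)` for the random partition taking the
singleton partition with probability `q₁` and `{{1,2},{3}}` with probability `1−q₁`. -/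
noncomputable def strEnt3 (q1 p1 p2 p3 : ℝ) : ℝ :=
  q1 * H3 p1 p2 p3 + (1 - q1) * binH (p1 + p2)

/-- Gibbs-type inequality: `-x log x ≤ -x log r + (r - x)`. -/
lemma gibbs {x r : ℝ} (hx : 0 ≤ x) (hr : 0 < r) :
    -(x * Real.log x) ≤ -(x * Real.log r) + (r - x) := by
  rcases eq_or_lt_of_le hx with h | h
  · simp [← h]
    positivity
  · have h1 : Real.log (r / x) ≤ r / x - 1 :=
      Real.log_le_sub_one_of_pos (by positivity)
    have h2 : Real.log (r / x) = Real.log r - Real.log x :=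
      Real.log_div (ne_of_gt hr) (ne_of_gt h)
    have h3 := mul_le_mul_of_nonneg_left h1 (le_of_lt h)
    have h4 : x * (r / x - 1) = r - x := by field_simp
    rw [h2, h4] at h3
    linarith

lemma strEnt3_mul_log2 (q p1 p2 p3 : ℝ) : strEnt3 q p1 p2 p3 * Real.log 2 =
    q * (-(p1 * Real.log p1) + -(p2 * Real.log p2) + -(p3 * Real.log p3))
    + (1 - q) * (-((p1 + p2) * Real.log (p1 + p2))
        + -((1 - (p1 + p2)) * Real.log (1 - (p1 + p2)))) := by
  have h2 : Real.log 2 ≠ 0 := ne_of_gt (Real.log_pos (by norm_num))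
  simp only [strEnt3, H3, binH, Real.logb]
  field_simp
  ring

/-- the structured entropy of the three-point example is maximized over
probability distributions `(p₁,p₂,p₃)` at `p₁ = p₂ = 1/(2(1+2^{−q₁}))`
(and `p₃ = 1 − p₁ − p₂`). -/
theorem strEnt3_le_max (q1 : ℝ) (hq0 : 0 ≤ q1) (hq1 : q1 ≤ 1)
    (p1 p2 p3 : ℝ) (h1 : 0 ≤ p1) (h2 : 0 ≤ p2) (h3 : 0 ≤ p3)
    (hsum : p1 + p2 + p3 = 1) :
    strEnt3 q1 p1 p2 p3
      ≤ strEnt3 q1 (1 / (2 * (1 + (2 : ℝ) ^ (-q1)))) (1 / (2 * (1 + (2 : ℝ) ^ (-q1))))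
          (1 - 2 * (1 / (2 * (1 + (2 : ℝ) ^ (-q1))))) := by
  have hp3 : p3 = 1 - (p1 + p2) := by linarith
  subst hp3
  set t : ℝ := (2 : ℝ) ^ (-q1) with ht
  have ht0 : 0 < t := Real.rpow_pos_of_pos two_pos _
  have hlogt : Real.log t = -q1 * Real.log 2 := by
    rw [ht, Real.log_rpow two_pos]
  have h1t : (0:ℝ) < 1 + t := by linarith
  set b : ℝ := 1 / (2 * (1 + t)) with hb
  have hb0 : 0 < b := by positivity
  set u : ℝ := Real.log (1 + t) with hu
  set L2 : ℝ := Real.log 2 with hL2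
  have hL2pos : 0 < L2 := Real.log_pos (by norm_num)
  have hlogb : Real.log b = -(L2 + u) := by
    rw [hb, hu, hL2]
    rw [one_div, Real.log_inv, Real.log_mul (by norm_num) (ne_of_gt h1t)]
  have haval : b + b = 1 / (1 + t) := by
    rw [hb]; field_simp; norm_num
  have hloga : Real.log (b + b) = -u := by
    rw [haval, hu, one_div, Real.log_inv]
  have hcval : 1 - (b + b) = t / (1 + t) := by
    rw [hb]; field_simp; ring
  have hc0 : 0 < 1 - (b + b) := by rw [hcval]; positivity
  have hlogc : Real.log (1 - (b + b)) = -q1 * L2 - u := by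
    rw [hcval, Real.log_div (ne_of_gt ht0) (ne_of_gt h1t), hlogt, hu, hL2]
  -- the five Gibbs inequalities
  have hs : 0 ≤ p1 + p2 := by linarith
  have hs1 : 0 ≤ 1 - (p1 + p2) := by linarith
  have g1 := gibbs h1 hb0
  have g2 := gibbs h2 hb0
  have g3 := gibbs h3 hc0
  have g4 := gibbs hs (by positivity : (0:ℝ) < b + b)
  have g5 := gibbs hs1 hc0
  rw [hlogb] at g1 g2
  rw [hlogc] at g3 g5
  rw [hloga] at g4
  have hq1' : 0 ≤ 1 - q1 := by linarith
  -- reduce to inequality multiplied by log 2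
  rw [← mul_le_mul_iff_of_pos_right hL2pos, strEnt3_mul_log2, strEnt3_mul_log2,
    show (1:ℝ) - 2 * b = 1 - (b + b) from by ring, hloga, hlogc, hlogb]
  calc q1 * (-(p1 * Real.log p1) + -(p2 * Real.log p2)
          + -((1 - (p1 + p2)) * Real.log (1 - (p1 + p2))))
        + (1 - q1) * (-((p1 + p2) * Real.log (p1 + p2))
          + -((1 - (p1 + p2)) * Real.log (1 - (p1 + p2))))
      = q1 * (-(p1 * Real.log p1)) + q1 * (-(p2 * Real.log p2))
        + q1 * (-((1 - (p1 + p2)) * Real.log (1 - (p1 + p2))))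
        + (1 - q1) * (-((p1 + p2) * Real.log (p1 + p2)))
        + (1 - q1) * (-((1 - (p1 + p2)) * Real.log (1 - (p1 + p2)))) := by ring
    _ ≤ q1 * (-(p1 * -(L2 + u)) + (b - p1)) + q1 * (-(p2 * -(L2 + u)) + (b - p2))
        + q1 * (-((1 - (p1 + p2)) * (-q1 * L2 - u)) + (1 - (b + b) - (1 - (p1 + p2))))
        + (1 - q1) * (-((p1 + p2) * -u) + (b + b - (p1 + p2)))
        + (1 - q1) * (-((1 - (p1 + p2)) * (-q1 * L2 - u)) + (1 - (b + b) - (1 - (p1 + p2)))) := by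
          gcongr
    _ = q1 * (-(b * -(L2 + u)) + -(b * -(L2 + u)) + -((1 - (b + b)) * (-q1 * L2 - u)))
        + (1 - q1) * (-((b + b) * -u) + -((1 - (b + b)) * (-q1 * L2 - u))) := by ring
end

section
/- For the three-point example with q₁ = 1 (all weight on the singleton partition), the structured entropy is maximized at the uniform distribution (1/3, 1/3, 1/3); and in the limit q₁ → 0, the maximizing distribution with p₁ = p₂ tends to (1/4, 1/4, 1/2). -/
open Filter

/-- The maximizing value `p₁ = p₂ = 1/(2(1+2^{−q₁}))` as a function of `q₁`. -/
noncomputable def pstar (q1 : ℝ) : ℝ := 1 / (2 * (1 + (2 : ℝ) ^ (-q1)))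

lemma gibbs_term (p : ℝ) (hp : 0 ≤ p) :
    -(p * Real.log p) ≤ p * Real.log 3 + (1/3 - p) := by
  rcases eq_or_lt_of_le hp with h | h
  · rw [← h]; norm_num
  · have h3p : 0 < 1 / (3 * p) := by positivity
    have hlog := Real.log_le_sub_one_of_pos h3p
    have hlogeq : Real.log (1 / (3 * p)) = -(Real.log 3 + Real.log p) := by
      rw [one_div, Real.log_inv, Real.log_mul (by norm_num) h.ne']
    rw [hlogeq] at hlog
    have := mul_le_mul_of_nonneg_left hlog hp
    have hinv : p * (1 / (3 * p) - 1) = 1/3 - p := by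
      field_simp
    nlinarith [this]

lemma pstar_cont : Tendsto pstar (nhds 0) (nhds (1/4)) := by
  have h : ContinuousAt pstar 0 := by
    apply ContinuousAt.div continuousAt_const
    · exact (continuousAt_const.mul (continuousAt_const.add
        ((Real.continuousAt_const_rpow (by norm_num : (2:ℝ) ≠ 0)).comp continuousAt_neg)))
    · norm_num [Real.rpow_natCast]
  have h0 : pstar 0 = 1/4 := by norm_num [pstar]
  simpa [h0] using h.tendsto

/-- for `q₁ = 1` the structured entropy is maximized at the uniform
distribution `(1/3, 1/3, 1/3)`; and as `q₁ → 0⁺`, the maximizing distribution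
`(p*, p*, 1 − 2p*)` with `p* = 1/(2(1+2^{−q₁}))` tends to `(1/4, 1/4, 1/2)`. -/
theorem strEnt3_uniform_max_and_limit :
    (∀ p1 p2 p3 : ℝ, 0 ≤ p1 → 0 ≤ p2 → 0 ≤ p3 → p1 + p2 + p3 = 1 →
        strEnt3 1 p1 p2 p3 ≤ strEnt3 1 (1/3) (1/3) (1/3)) ∧
      Tendsto pstar (nhdsWithin 0 (Set.Ioi 0)) (nhds (1/4)) ∧
      Tendsto (fun q1 => 1 - 2 * pstar q1) (nhdsWithin 0 (Set.Ioi 0)) (nhds (1/2)) := by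
  have hl2 : (0:ℝ) < Real.log 2 := Real.log_pos (by norm_num)
  refine ⟨?_, ?_, ?_⟩
  · intro p1 p2 p3 h1 h2 h3 hsum
    have key : -(p1 * Real.log p1 + p2 * Real.log p2 + p3 * Real.log p3) ≤ Real.log 3 := by
      have := gibbs_term p1 h1
      have := gibbs_term p2 h2
      have := gibbs_term p3 h3
      have hs : p1 * Real.log 3 + p2 * Real.log 3 + p3 * Real.log 3 = Real.log 3 := by
        have : (p1 + p2 + p3) * Real.log 3 = Real.log 3 := by rw [hsum, one_mul]
        linarith [this]
      linarith
    simp only [strEnt3, H3, one_mul, sub_self, zero_mul, add_zero, Real.logb]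
    have huni : -(1/3 * (Real.log (1/3) / Real.log 2) + 1/3 * (Real.log (1/3) / Real.log 2)
        + 1/3 * (Real.log (1/3) / Real.log 2)) = Real.log 3 / Real.log 2 := by
      rw [one_div, Real.log_inv]; ring
    rw [huni]
    have : -(p1 * (Real.log p1 / Real.log 2) + p2 * (Real.log p2 / Real.log 2)
        + p3 * (Real.log p3 / Real.log 2))
        = -(p1 * Real.log p1 + p2 * Real.log p2 + p3 * Real.log p3) / Real.log 2 := by
      ring
    rw [this, div_le_div_iff_of_pos_right hl2]
    exact key
  · exact pstar_cont.mono_left nhdsWithin_le_nhds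
  · have : Tendsto (fun q1 => 1 - 2 * pstar q1) (nhds 0) (nhds (1 - 2 * (1/4))) :=
      tendsto_const_nhds.sub (tendsto_const_nhds.mul pstar_cont)
    norm_num at this
    exact this.mono_left nhdsWithin_le_nhds
end
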